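/- Let A be a unital C*-algebra, μ a state, and a ∈ A normal. For any Lipschitz function F on the spectrum of a, σ^μ(F(a)) ≤ Lip(F) · σ^μ(a), where F(a) is given by the continuous functional calculus. -/

import Mathlib

open scoped ComplexOrder

/-- The standard deviation σ^μ(a) = max(‖a − μ(a)1‖_μ, ‖a* − conj(μ(a))1‖_μ) with
respect to a state μ on a unital C*-algebra, where ‖c‖_μ = μ(c*c)^{1/2}. -/
noncomputable def stdDev {A : Type*} [CStarAlgebra A] (μ : A →ₗ[ℂ] ℂ) (a : A) : ℝ :=
  max (Real.sqrt (μ (star (a - μ a • 1) * (a - μ a • 1))).re)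
    (Real.sqrt (μ (star (star a - (starRingEnd ℂ) (μ a) • 1) *
      (star a - (starRingEnd ℂ) (μ a) • 1))).re)

section helpers
variable {A : Type*} [CStarAlgebra A] (μ : A →ₗ[ℂ] ℂ)

lemma mu_star_eq (hpos : ∀ a : A, 0 ≤ μ (star a * a)) (x : A) :
    μ (star x) = starRingEnd ℂ (μ x) := by
  have him : ∀ b : A, (μ (star b * b)).im = 0 := fun b => by
    have := hpos b
    rw [Complex.le_def] at this
    simpa using this.2.symm
  have key : ∀ u v : A, μ (star u * v) = starRingEnd ℂ (μ (star v * u)) := by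
    intro u v
    set s := μ (star u * v) with hs
    set t := μ (star v * u) with ht
    have h1 : s.im = -t.im := by
      have e : star (u + v) * (u + v)
          = star u * u + (star u * v + star v * u) + star v * v := by
        simp [star_add, add_mul, mul_add]; abel
      have := him (u + v)
      rw [e] at this
      simp only [map_add, Complex.add_im, him u, him v, ← hs, ← ht] at this
      linarith
    have h2 : s.re = t.re := by
      have e : star (u + Complex.I • v) * (u + Complex.I • v)
          = star u * u + (Complex.I • (star u * v) + (-Complex.I) • (star v * u))
            + star v * v := by
        simp [star_add, add_mul, mul_add, star_smul, smul_mul_assoc, mul_smul_comm,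
          smul_smul, Complex.star_def, Complex.conj_I, Complex.I_mul_I, neg_mul]
        abel
      have := him (u + Complex.I • v)
      rw [e] at this
      simp only [map_add, map_smul, Complex.add_im, him u, him v, ← hs, ← ht,
        smul_eq_mul, Complex.mul_im, Complex.I_re, Complex.I_im, Complex.neg_re,
        Complex.neg_im] at this
      linarith
    apply Complex.ext <;> simp [h1, h2]
  simpa using (congrArg (starRingEnd ℂ) (key 1 x)).symm

lemma mu_cfc_nonneg (hpos : ∀ a : A, 0 ≤ μ (star a * a)) (a : A) (ha : IsStarNormal a)
    (f : ℂ → ℂ) (hf : ContinuousOn f (spectrum ℂ a))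
    (h : ∀ x ∈ spectrum ℂ a, 0 ≤ f x) : 0 ≤ μ (cfc f a) := by
  set g : ℂ → ℂ := fun x => (Real.sqrt ((f x).re) : ℂ) with hg
  have hgc : ContinuousOn g (spectrum ℂ a) :=
    Complex.continuous_ofReal.comp_continuousOn
      (Real.continuous_sqrt.comp_continuousOn (Complex.continuous_re.comp_continuousOn hf))
  have key : cfc f a = star (cfc g a) * cfc g a := by
    rw [← cfc_star g a, ← cfc_mul _ _ a (by fun_prop) hgc]
    apply cfc_congr
    intro x hx
    have h0 := h x hx
    rw [Complex.le_def] at h0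
    simp only [hg, Complex.star_def, Complex.conj_ofReal, ← Complex.ofReal_mul,
      Real.mul_self_sqrt h0.1]
    exact Complex.ext (by simp) (by simp [← h0.2])
  rw [key]
  exact hpos _

lemma mu_expand (hpos : ∀ a : A, 0 ≤ μ (star a * a)) (hone : μ 1 = 1) (b : A) (c : ℂ) :
    μ (star (b - c • 1) * (b - c • 1))
      = μ (star b * b) - c * star (μ b) - star c * μ b + c * star c := by
  have e : star (b - c • 1) * (b - c • 1)
      = star b * b - c • star b - star c • b + (c * star c) • 1 := by
    simp only [star_sub, star_smul, star_one, sub_mul, mul_sub, smul_sub, smul_mul_assoc,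
      mul_smul_comm, smul_smul, mul_one, one_mul]
    abel
  rw [e]
  simp only [map_sub, map_add, map_smul, smul_eq_mul, hone, mul_one,
    mu_star_eq μ hpos b, Complex.star_def]
lemma stdDev_eq_sqrt (hpos : ∀ a : A, 0 ≤ μ (star a * a)) (hone : μ 1 = 1)
    (b : A) (hb : IsStarNormal b) :
    stdDev μ b = Real.sqrt ((μ (star b * b) - star (μ b) * μ b).re) := by
  have hsb : star (b - μ b • 1) = star b - starRingEnd ℂ (μ b) • 1 := by
    simp [star_sub, star_smul, Complex.star_def]
  have hcomm : Commute (star (b - μ b • 1)) (b - μ b • 1) := by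
    rw [hsb]
    exact (hb.star_comm_self.sub_left ((Commute.one_left b).smul_left _)).sub_right
      ((Commute.one_right (star b)).smul_right _ |>.sub_left
        (((Commute.one_left (1 : A)).smul_left _).smul_right _))
  have e2 : star (star b - starRingEnd ℂ (μ b) • 1) * (star b - starRingEnd ℂ (μ b) • 1)
      = star (b - μ b • 1) * (b - μ b • 1) := by
    rw [← hsb, star_star]
    exact hcomm.eq.symm
  unfold stdDev
  rw [e2, max_self, mu_expand μ hpos hone b (μ b),
    show μ (star b * b) - μ b * star (μ b) - star (μ b) * μ b + μ b * star (μ b)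
      = μ (star b * b) - star (μ b) * μ b from by ring]
end helpers

/-- Markov property of the standard deviation: if a is a normal element of a unital
C*-algebra A with state μ, and F is Lipschitz with constant K on the spectrum of a,
then σ^μ(F(a)) ≤ K·σ^μ(a), where F(a) is the continuous functional calculus. -/
theorem stdDev_cfc_lipschitz {A : Type*} [CStarAlgebra A]
    (μ : A →ₗ[ℂ] ℂ) (hpos : ∀ a : A, 0 ≤ μ (star a * a)) (hone : μ 1 = 1)
    (a : A) (ha : IsStarNormal a) (F : ℂ → ℂ) (K : NNReal)
    (hF : LipschitzOnWith K F (spectrum ℂ a)) :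
    stdDev μ (cfc F a) ≤ K * stdDev μ a := by
  haveI := ha
  have hFc : ContinuousOn F (spectrum ℂ a) := hF.continuousOn
  have hfan : IsStarNormal (cfc F a) := cfc_predicate F a
  set K' : ℂ := ((K : ℝ) : ℂ) with hK'
  -- the two-point positivity
  have keyY : ∀ y ∈ spectrum ℂ a, 0 ≤
      K' ^ 2 * (μ (star a * a) - y * star (μ a) - star y * μ a + y * star y)
        - (μ (star (cfc F a) * cfc F a) - F y * star (μ (cfc F a))
            - star (F y) * μ (cfc F a) + F y * star (F y)) := by
    intro y hy
    have ha1 : a - y • 1 = cfc (fun x : ℂ => x - y) a := by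
      rw [cfc_sub (fun x : ℂ => x) (fun _ => y) a (by fun_prop) (by fun_prop),
        cfc_id' ℂ a, cfc_const y a, Algebra.algebraMap_eq_smul_one]
    have ha2 : cfc F a - F y • 1 = cfc (fun x : ℂ => F x - F y) a := by
      rw [cfc_sub F (fun _ => F y) a hFc (by fun_prop),
        cfc_const (F y) a, Algebra.algebraMap_eq_smul_one]
    have e3 : cfc (fun x : ℂ => star (x - y) * (x - y)) a
        = star (a - y • 1) * (a - y • 1) := by
      calc cfc (fun x : ℂ => star (x - y) * (x - y)) a
          = cfc (fun x : ℂ => star (x - y)) a * cfc (fun x : ℂ => x - y) a :=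
            cfc_mul _ _ a (by fun_prop) (by fun_prop)
        _ = star (cfc (fun x : ℂ => x - y) a) * cfc (fun x : ℂ => x - y) a := by
            rw [cfc_star (fun x : ℂ => x - y) a]
        _ = star (a - y • 1) * (a - y • 1) := by rw [← ha1]
    have e4 : cfc (fun x : ℂ => star (F x - F y) * (F x - F y)) a
        = star (cfc F a - F y • 1) * (cfc F a - F y • 1) := by
      calc cfc (fun x : ℂ => star (F x - F y) * (F x - F y)) a
          = cfc (fun x : ℂ => star (F x - F y)) a * cfc (fun x : ℂ => F x - F y) a :=
            cfc_mul _ _ a ((hFc.sub continuousOn_const).star) (hFc.sub continuousOn_const)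
        _ = star (cfc (fun x : ℂ => F x - F y) a) * cfc (fun x : ℂ => F x - F y) a := by
            rw [cfc_star (fun x : ℂ => F x - F y) a]
        _ = star (cfc F a - F y • 1) * (cfc F a - F y • 1) := by rw [← ha2]
    have e5 : μ (cfc (fun x : ℂ => K' ^ 2 * (star (x - y) * (x - y))
          - star (F x - F y) * (F x - F y)) a)
        = K' ^ 2 * μ (star (a - y • 1) * (a - y • 1))
          - μ (star (cfc F a - F y • 1) * (cfc F a - F y • 1)) := by
      rw [cfc_sub (fun x : ℂ => K' ^ 2 * (star (x - y) * (x - y)))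
          (fun x : ℂ => star (F x - F y) * (F x - F y)) a (by fun_prop)
          (((hFc.sub continuousOn_const).star).mul (hFc.sub continuousOn_const)),
        cfc_const_mul (K' ^ 2) (fun x : ℂ => star (x - y) * (x - y)) a (by fun_prop),
        e3, e4, map_sub, map_smul, smul_eq_mul]
    have hnn : ∀ x ∈ spectrum ℂ a, 0 ≤ K' ^ 2 * (star (x - y) * (x - y))
        - star (F x - F y) * (F x - F y) := by
      intro x hx
      have hd : ‖F x - F y‖ ≤ (K : ℝ) * ‖x - y‖ := by
        have := hF.dist_le_mul x hx y hy
        simpa [Complex.dist_eq] using this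
      have h1 : star (x - y) * (x - y) = ((Complex.normSq (x - y) : ℝ) : ℂ) := by
        rw [Complex.star_def, mul_comm, Complex.mul_conj]
      have h2 : star (F x - F y) * (F x - F y)
          = ((Complex.normSq (F x - F y) : ℝ) : ℂ) := by
        rw [Complex.star_def, mul_comm, Complex.mul_conj]
      rw [h1, h2, hK', ← Complex.ofReal_pow, ← Complex.ofReal_mul, ← Complex.ofReal_sub,
        Complex.zero_le_real, ← Complex.sq_norm, ← Complex.sq_norm]
      nlinarith [norm_nonneg (x - y), norm_nonneg (F x - F y)]
    have hcont : ContinuousOn (fun x : ℂ => K' ^ 2 * (star (x - y) * (x - y))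
        - star (F x - F y) * (F x - F y)) (spectrum ℂ a) :=
      (continuousOn_const.mul (((continuousOn_id.sub continuousOn_const).star).mul
        (continuousOn_id.sub continuousOn_const))).sub
        (((hFc.sub continuousOn_const).star).mul (hFc.sub continuousOn_const))
    have hmu := mu_cfc_nonneg μ hpos a ha _ hcont hnn
    rw [e5, mu_expand μ hpos hone a y, mu_expand μ hpos hone (cfc F a) (F y)] at hmu
    exact hmu
  -- abbreviations
  set m := μ a with hm
  set mF := μ (cfc F a) with hmF
  set A2 := μ (star a * a) with hA2
  set B2 := μ (star (cfc F a) * cfc F a) with hB2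
  -- the averaged function
  set G : ℂ → ℂ := fun y =>
    K' ^ 2 * (A2 - y * star m - star y * m + y * star y)
      - (B2 - F y * star mF - star (F y) * mF + F y * star (F y)) with hG
  have hGcont : ContinuousOn G (spectrum ℂ a) := by
    apply ContinuousOn.sub
    · exact continuousOn_const.mul ((((continuousOn_const.sub
        (continuousOn_id.mul continuousOn_const)).sub
        ((continuousOn_id.star).mul continuousOn_const)).add
        (continuousOn_id.mul continuousOn_id.star)))
    · exact ((continuousOn_const.sub (hFc.mul continuousOn_const)).sub
        ((hFc.star).mul continuousOn_const)).add (hFc.mul hFc.star)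
  have hG0 : 0 ≤ μ (cfc G a) := mu_cfc_nonneg μ hpos a ha G hGcont keyY
  -- compute cfc G a
  have t1 : cfc (fun y : ℂ => y * star y) a = a * star a := by
    rw [cfc_mul (fun y : ℂ => y) (fun y : ℂ => star y) a (by fun_prop) (by fun_prop),
      cfc_id' ℂ a, cfc_star_id a]
  have t2 : cfc (fun y : ℂ => y * star m) a = star m • a := by
    rw [show (fun y : ℂ => y * star m) = (fun y : ℂ => star m * y) from
      funext fun y => mul_comm _ _, cfc_const_mul_id (star m) a]
  have t3 : cfc (fun y : ℂ => star y * m) a = m • star a := by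
    rw [show (fun y : ℂ => star y * m) = (fun y : ℂ => m * star y) from
      funext fun y => mul_comm _ _,
      cfc_const_mul m (fun y : ℂ => star y) a (by fun_prop), cfc_star_id a]
  have t4 : cfc (fun y : ℂ => F y * star mF) a = star mF • cfc F a := by
    rw [show (fun y : ℂ => F y * star mF) = (fun y : ℂ => star mF * F y) from
      funext fun y => mul_comm _ _, cfc_const_mul (star mF) F a hFc]
  have t5 : cfc (fun y : ℂ => star (F y) * mF) a = mF • star (cfc F a) := by
    rw [show (fun y : ℂ => star (F y) * mF) = (fun y : ℂ => mF * star (F y)) from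
      funext fun y => mul_comm _ _,
      cfc_const_mul mF (fun y : ℂ => star (F y)) a (hFc.star), cfc_star F a]
  have t6 : cfc (fun y : ℂ => F y * star (F y)) a = cfc F a * star (cfc F a) := by
    rw [cfc_mul F (fun y : ℂ => star (F y)) a hFc (hFc.star), cfc_star F a]
  have t7 : ∀ c : ℂ, cfc (fun _ : ℂ => c) a = c • 1 := fun c => by
    rw [cfc_const c a, Algebra.algebraMap_eq_smul_one]
  have hg1 : cfc (fun y : ℂ => A2 - y * star m - star y * m + y * star y) a
      = A2 • 1 - star m • a - m • star a + a * star a := by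
    rw [cfc_add a (fun y : ℂ => A2 - y * star m - star y * m) (fun y : ℂ => y * star y)
        (by fun_prop) (by fun_prop),
      cfc_sub (fun y : ℂ => A2 - y * star m) (fun y : ℂ => star y * m) a
        (by fun_prop) (by fun_prop),
      cfc_sub (fun _ : ℂ => A2) (fun y : ℂ => y * star m) a
        (by fun_prop) (by fun_prop),
      t1, t2, t3, t7]
  have hg2 : cfc (fun y : ℂ => B2 - F y * star mF - star (F y) * mF + F y * star (F y)) a
      = B2 • 1 - star mF • cfc F a - mF • star (cfc F a) + cfc F a * star (cfc F a) := by
    rw [cfc_add a (fun y : ℂ => B2 - F y * star mF - star (F y) * mF)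
        (fun y : ℂ => F y * star (F y))
        ((continuousOn_const.sub (hFc.mul continuousOn_const)).sub
          ((hFc.star).mul continuousOn_const)) (hFc.mul hFc.star),
      cfc_sub (fun y : ℂ => B2 - F y * star mF) (fun y : ℂ => star (F y) * mF) a
        (continuousOn_const.sub (hFc.mul continuousOn_const))
        ((hFc.star).mul continuousOn_const),
      cfc_sub (fun _ : ℂ => B2) (fun y : ℂ => F y * star mF) a
        continuousOn_const (hFc.mul continuousOn_const),
      t4, t5, t6, t7]
  have ecfc : cfc G a
      = K' ^ 2 • (A2 • 1 - star m • a - m • star a + a * star a)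
        - (B2 • 1 - star mF • cfc F a - mF • star (cfc F a) + cfc F a * star (cfc F a)) := by
    rw [hG, cfc_sub (fun y : ℂ => K' ^ 2 * (A2 - y * star m - star y * m + y * star y))
        (fun y : ℂ => B2 - F y * star mF - star (F y) * mF + F y * star (F y)) a
        (by fun_prop)
        (((continuousOn_const.sub (hFc.mul continuousOn_const)).sub
          ((hFc.star).mul continuousOn_const)).add (hFc.mul hFc.star)),
      cfc_const_mul (K' ^ 2) (fun y : ℂ => A2 - y * star m - star y * m + y * star y) a
        (by fun_prop),
      hg1, hg2]
  -- value of μ (cfc G a)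
  have hval : μ (cfc G a) = 2 * (K' ^ 2 * (A2 - star m * m) - (B2 - star mF * mF)) := by
    rw [ecfc]
    simp only [map_sub, map_add, map_smul, smul_eq_mul, hone, mul_one]
    rw [← ha.star_comm_self.eq, ← hfan.star_comm_self.eq, mu_star_eq μ hpos a,
      mu_star_eq μ hpos (cfc F a), ← hm, ← hmF, ← hA2, ← hB2]
    simp only [Complex.star_def]
    ring
  have hineq : (B2 - star mF * mF).re ≤ (K : ℝ) ^ 2 * (A2 - star m * m).re := by
    rw [hval, Complex.le_def] at hG0
    have h := hG0.1
    have hK2 : K' ^ 2 = (((K : ℝ) ^ 2 : ℝ) : ℂ) := by rw [hK']; push_cast; ring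
    rw [hK2] at h
    simp only [Complex.zero_re, Complex.mul_re, Complex.sub_re, Complex.sub_im,
      Complex.ofReal_re, Complex.ofReal_im, Complex.re_ofNat, Complex.im_ofNat,
      Complex.mul_im] at h
    simp only [Complex.sub_re, Complex.mul_re]
    linarith
  have hVare : 0 ≤ (A2 - star m * m).re := by
    have h0 := hpos (a - μ a • 1)
    rw [mu_expand μ hpos hone a (μ a), ← hm, ← hA2] at h0
    rw [Complex.le_def] at h0
    have h0' := h0.1
    rw [show A2 - m * star m - star m * m + m * star m = A2 - star m * m from by ring] at h0'
    simpa using h0'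
  rw [stdDev_eq_sqrt μ hpos hone (cfc F a) hfan, stdDev_eq_sqrt μ hpos hone a ha,
    ← hm, ← hmF, ← hA2, ← hB2]
  calc Real.sqrt ((B2 - star mF * mF).re)
      ≤ Real.sqrt ((K : ℝ) ^ 2 * (A2 - star m * m).re) := Real.sqrt_le_sqrt hineq
    _ = (K : ℝ) * Real.sqrt ((A2 - star m * m).re) := by
        rw [Real.sqrt_mul (by positivity), Real.sqrt_sq K.coe_nonneg]
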